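/- arXiv:1404.2224 — 4 statements merged into one kernel-verified Lean document; each statement's English description precedes it below -/
import Mathlib

section
/- For every real x ≥ 1 and every positive integer q, |∑_{a ≤ x, gcd(a,q)=1} μ(a)/a| ≤ 1, where the sum is over positive integers a ≤ x coprime to q and μ is the Möbius function. -/
open ArithmeticFunction ArithmeticFunction.Moebius ArithmeticFunction.zeta Finset

noncomputable def Fq (q : ℕ) : ArithmeticFunction ℤ :=
  ⟨fun d => if Nat.gcd d q = 1 then μ d else 0, by simp⟩

lemma Fq_apply (q d : ℕ) : Fq q d = if Nat.gcd d q = 1 then μ d else 0 := rfl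

lemma Fq_mult (q : ℕ) : (Fq q).IsMultiplicative := by
  constructor
  · simp [Fq_apply]
  · intro m n h
    simp only [Fq_apply]
    rcases eq_or_ne (Nat.gcd m q) 1 with hm | hm <;> rcases eq_or_ne (Nat.gcd n q) 1 with hn | hn
    · rw [if_pos hm, if_pos hn, if_pos (Nat.Coprime.mul hm hn),
        isMultiplicative_moebius.map_mul_of_coprime h]
    · rw [if_neg fun hc => hn (Nat.Coprime.coprime_dvd_left (dvd_mul_left n m) hc),
        if_pos hm, if_neg hn, mul_zero]
    · rw [if_neg fun hc => hm (Nat.Coprime.coprime_dvd_left (dvd_mul_right m n) hc),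
        if_neg hm, zero_mul]
    · rw [if_neg fun hc => hm (Nat.Coprime.coprime_dvd_left (dvd_mul_right m n) hc),
        if_neg hm, zero_mul]

noncomputable def Gq (q : ℕ) : ArithmeticFunction ℤ := Fq q * ζ

lemma Gq_apply (q n : ℕ) : Gq q n = ∑ d ∈ n.divisors, Fq q d :=
  coe_mul_zeta_apply

lemma Gq_one (q : ℕ) : Gq q 1 = 1 := ((Fq_mult q).mul isMultiplicative_zeta.natCast).1

lemma Gq_prime_pow (q p k : ℕ) (hp : p.Prime) (hk : 1 ≤ k) :
    Gq q (p ^ k) = if Nat.gcd p q = 1 then 0 else 1 := by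
  rw [Gq_apply, Nat.sum_divisors_prime_pow hp]
  rw [Finset.sum_range_succ']
  have h2 : ∀ i ∈ Finset.range k, Fq q (p ^ (i + 1)) = if Nat.gcd p q = 1 then (if i = 0 then -1 else 0) else 0 := by
    intro i _
    rw [Fq_apply]
    rcases eq_or_ne (Nat.gcd p q) 1 with h | h
    · rw [if_pos, if_pos h]
      · rcases Nat.eq_zero_or_pos i with rfl | hi
        · simp [moebius_apply_prime hp]
        · rw [moebius_eq_zero_of_not_squarefree, if_neg hi.ne']
          intro hs
          have := ((Nat.squarefree_pow_iff hp.ne_one (by omega)).mp hs).2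
          omega
      · rcases Nat.eq_zero_or_pos i with rfl | hi
        · simpa using h
        · exact Nat.Coprime.pow_left _ h
    · rw [if_neg, if_neg h]
      intro hc
      exact h (Nat.Coprime.coprime_dvd_left (dvd_pow_self p (by omega)) hc)
  rw [Finset.sum_congr rfl h2]
  have h1 : Fq q (p ^ 0) = 1 := by simp [Fq_apply]
  rw [h1]
  rcases eq_or_ne (Nat.gcd p q) 1 with h | h
  · simp only [if_pos h]
    rw [Finset.sum_ite_eq' (Finset.range k) 0 fun _ => (-1 : ℤ),
      if_pos (Finset.mem_range.mpr (by omega))]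
    ring
  · simp only [if_neg h]
    simp

lemma Gq_zero_or_one (q : ℕ) (n : ℕ) (hn : n ≠ 0) : Gq q n = 0 ∨ Gq q n = 1 := by
  rw [ArithmeticFunction.IsMultiplicative.multiplicative_factorization (Gq q)
    ((Fq_mult q).mul isMultiplicative_zeta.natCast) hn]
  rw [Finsupp.prod]
  refine Finset.prod_induction _ (fun z => z = 0 ∨ z = 1) ?_ (Or.inr rfl) ?_
  · rintro a b (ha | ha) hb <;> rcases hb with hb | hb <;> simp [ha, hb]
  · intro p hp
    have hp' : p.Prime := Nat.prime_of_mem_primeFactors (by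
      rwa [← Nat.support_factorization])
    have hk : 1 ≤ n.factorization p := Nat.pos_of_ne_zero (Finsupp.mem_support_iff.mp hp)
    rw [Gq_prime_pow q p _ hp' hk]
    split <;> simp

lemma Gq_coprime (q n : ℕ) (hn : 2 ≤ n) (h : Nat.gcd n q = 1) : Gq q n = 0 := by
  rw [Gq_apply]
  have : ∀ d ∈ n.divisors, Fq q d = μ d := by
    intro d hd
    rw [Fq_apply, if_pos (Nat.Coprime.coprime_dvd_left (Nat.mem_divisors.mp hd).1 h)]
  rw [Finset.sum_congr rfl this, ← coe_mul_zeta_apply, moebius_mul_coe_zeta, one_apply,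
    if_neg (by omega)]

lemma divisors_eq_filter (N n : ℕ) (hn : n ∈ Icc 1 N) :
    n.divisors = (Icc 1 N).filter (· ∣ n) := by
  simp only [mem_Icc] at hn
  ext d
  simp only [Nat.mem_divisors, mem_filter, mem_Icc]
  constructor
  · rintro ⟨hd, -⟩
    refine ⟨⟨?_, le_trans (Nat.le_of_dvd (by omega) hd) hn.2⟩, hd⟩
    rcases Nat.eq_zero_or_pos d with rfl | h
    · obtain rfl : n = 0 := Nat.eq_zero_of_zero_dvd hd
      omega
    · omega
  · rintro ⟨-, hd⟩
    exact ⟨hd, by omega⟩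

lemma hyperbola (q N : ℕ) :
    ∑ n ∈ Icc 1 N, Gq q n
      = ∑ d ∈ (Icc 1 N).filter (fun a => Nat.gcd a q = 1), (μ d : ℤ) * ((N / d : ℕ) : ℤ) := by
  have h1 : ∀ n ∈ Icc 1 N, Gq q n = ∑ d ∈ Icc 1 N, if d ∣ n then Fq q d else 0 := by
    intro n hn
    rw [Gq_apply, divisors_eq_filter N n hn, Finset.sum_filter]
  rw [Finset.sum_congr rfl h1, Finset.sum_comm]
  have h2 : ∀ d ∈ Icc 1 N, (∑ n ∈ Icc 1 N, if d ∣ n then Fq q d else 0)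
      = ((N / d : ℕ) : ℤ) * Fq q d := by
    intro d _
    rw [← Finset.sum_filter, Finset.sum_const, nsmul_eq_mul]
    congr 2
    rw [show Icc 1 N = Ioc 0 N from by ext a; simp [Nat.lt_iff_add_one_le]]
    exact Nat.Ioc_filter_dvd_card_eq_div N d
  rw [Finset.sum_congr rfl h2, Finset.sum_filter]
  refine Finset.sum_congr rfl fun d _ => ?_
  rw [Fq_apply]
  split <;> simp [mul_comm]

/-- The elementary bound: `|∑_{a ≤ x, (a,q)=1} μ(a)/a| ≤ 1`. -/
theorem abs_sum_moebius_div_le_one (x : ℝ) (hx : 1 ≤ x) (q : ℕ) (hq : 0 < q) :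
    |∑ a ∈ (Finset.Icc 1 ⌊x⌋₊).filter (fun a => Nat.gcd a q = 1),
        (μ a : ℝ) / a| ≤ 1 := by
  classical
  set N := ⌊x⌋₊ with hNdef
  set P := (Finset.Icc 1 N).filter (fun a => Nat.gcd a q = 1) with hP
  have hx0 : (0 : ℝ) < x := by linarith
  have hN1 : 1 ≤ N := Nat.le_floor (by exact_mod_cast hx)
  have hNx : (N : ℝ) ≤ x := Nat.floor_le hx0.le
  have h1P : (1 : ℕ) ∈ P := by
    simp only [hP, Finset.mem_filter, Finset.mem_Icc]
    exact ⟨⟨le_refl 1, hN1⟩, Nat.gcd_one_left q⟩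
  set S : ℤ := ∑ n ∈ Finset.Icc 1 N, Gq q n with hS
  set C : ℕ := (P.erase 1).card with hC
  have herase : (Finset.Icc 1 N).erase 1 = Finset.Icc 2 N := by
    ext a
    simp only [Finset.mem_erase, Finset.mem_Icc]
    omega
  have hPerase : P.erase 1 = (Finset.Icc 2 N).filter (fun a => Nat.gcd a q = 1) := by
    rw [hP, ← Finset.filter_erase, herase]
  have hcard2 : (Finset.Icc 2 N).card = N - 1 := by
    rw [Nat.card_Icc]
    omega
  have hCle : C ≤ N - 1 := by
    rw [hC, hPerase, ← hcard2]
    exact Finset.card_filter_le _ _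
  have hSsplit : S = 1 + ∑ n ∈ Finset.Icc 2 N, Gq q n := by
    rw [hS, ← Finset.add_sum_erase _ _ (Finset.mem_Icc.mpr ⟨le_refl 1, hN1⟩), Gq_one, herase]
  have hSlow : 1 ≤ S := by
    have h0 : 0 ≤ ∑ n ∈ Finset.Icc 2 N, Gq q n :=
      Finset.sum_nonneg fun n hn => by
        have hn' : n ≠ 0 := by simp only [Finset.mem_Icc] at hn; omega
        rcases Gq_zero_or_one q n hn' with h | h <;> simp [h]
    omega
  have hShigh : S + (C : ℤ) ≤ N := by
    have hb : ∀ n ∈ Finset.Icc 2 N, Gq q n ≤ if Nat.gcd n q = 1 then 0 else 1 := by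
      intro n hn
      simp only [Finset.mem_Icc] at hn
      rcases eq_or_ne (Nat.gcd n q) 1 with h | h
      · rw [if_pos h, Gq_coprime q n hn.1 h]
      · rw [if_neg h]
        rcases Gq_zero_or_one q n (by omega) with h' | h' <;> simp [h']
    have h2 := Finset.sum_le_sum hb
    have h3 : ∑ n ∈ Finset.Icc 2 N, (if Nat.gcd n q = 1 then (0 : ℤ) else 1)
        = (((Finset.Icc 2 N).filter (fun n => ¬ Nat.gcd n q = 1)).card : ℤ) := by
      rw [Finset.sum_ite, Finset.sum_const_zero, Finset.sum_const, zero_add]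
      simp
    rw [h3] at h2
    have h4 : ((Finset.Icc 2 N).filter (fun n => Nat.gcd n q = 1)).card
        + ((Finset.Icc 2 N).filter (fun n => ¬ Nat.gcd n q = 1)).card = N - 1 := by
      rw [Finset.card_filter_add_card_filter_not, hcard2]
    have h5 : C = ((Finset.Icc 2 N).filter (fun n => Nat.gcd n q = 1)).card := by
      rw [hC, hPerase]
    rw [hSsplit]
    omega
  have hhyp : S = ∑ d ∈ P, (μ d : ℤ) * ((N / d : ℕ) : ℤ) := by
    rw [hS, hyperbola]
  set T := ∑ a ∈ P, (μ a : ℝ) / a with hT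
  set E := ∑ a ∈ P.erase 1, (μ a : ℝ) * (x / a - ((N / a : ℕ) : ℝ)) with hE
  have hxT : x * T = (S : ℝ) + ((x - N) + E) := by
    rw [hT, Finset.mul_sum]
    have e1 : ∀ a ∈ P, x * ((μ a : ℝ) / a)
        = (μ a : ℝ) * ((N / a : ℕ) : ℝ) + (μ a : ℝ) * (x / a - ((N / a : ℕ) : ℝ)) := by
      intro a _
      ring
    rw [Finset.sum_congr rfl e1, Finset.sum_add_distrib]
    congr 1
    · rw [hhyp]
      push_cast
      rfl
    · rw [hE, ← Finset.add_sum_erase _ _ h1P]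
      norm_num [moebius_apply_one]
  have hrb : ∀ a ∈ P.erase 1, |(μ a : ℝ) * (x / a - ((N / a : ℕ) : ℝ))| ≤ 1 := by
    intro a ha
    have haP : a ∈ P := Finset.mem_of_mem_erase ha
    have ha1 : 1 ≤ a := by
      rw [hP, Finset.mem_filter, Finset.mem_Icc] at haP
      exact haP.1.1
    have ha0 : (0 : ℝ) < a := by exact_mod_cast ha1
    have hfl : (N / a : ℕ) = ⌊x / a⌋₊ := (Nat.floor_div_natCast x a).symm
    have h0 : 0 ≤ x / a - ((N / a : ℕ) : ℝ) := by
      rw [hfl]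
      exact sub_nonneg.mpr (Nat.floor_le (by positivity))
    have h1' : x / a - ((N / a : ℕ) : ℝ) ≤ 1 := by
      rw [hfl]
      have := Nat.lt_floor_add_one (x / a)
      linarith
    have hm : |(μ a : ℝ)| ≤ 1 := by
      have := abs_moebius_le_one (n := a)
      exact_mod_cast this
    rw [abs_mul]
    exact mul_le_one₀ hm (abs_nonneg _) (by rw [abs_of_nonneg h0]; exact h1')
  have hEb : |E| ≤ (C : ℝ) := by
    calc |E| ≤ ∑ a ∈ P.erase 1, |(μ a : ℝ) * (x / a - ((N / a : ℕ) : ℝ))| :=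
          Finset.abs_sum_le_sum_abs _ _
      _ ≤ ∑ _a ∈ P.erase 1, 1 := Finset.sum_le_sum hrb
      _ = (C : ℝ) := by simp [hC]
  have hS1 : (1 : ℝ) ≤ (S : ℝ) := by exact_mod_cast hSlow
  have hSC : (S : ℝ) + (C : ℝ) ≤ (N : ℝ) := by exact_mod_cast hShigh
  have hC1 : (C : ℝ) ≤ (N : ℝ) - 1 := by
    have h := Nat.cast_le (α := ℝ) |>.mpr hCle
    rwa [Nat.cast_sub hN1, Nat.cast_one] at h
  have hxTb : |x * T| ≤ x := by
    rw [abs_le] at hEb ⊢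
    constructor <;> rw [hxT] <;> [linarith [hEb.1]; linarith [hEb.2]]
  rw [abs_mul, abs_of_pos hx0] at hxTb
  have : |T| ≤ 1 := le_of_mul_le_mul_left (by linarith) hx0
  exact this
end

section
/- Vaughan's identity: for all real U, V ≥ 0 and every integer n ≥ 1, Λ(n) = (μ_{≤U} ∗ log)(n) − (Λ_{≤V} ∗ μ_{≤U} ∗ 1)(n) + (1 ∗ μ_{>U} ∗ Λ_{>V})(n) + Λ_{≤V}(n), where ∗ denotes Dirichlet convolution. -/
open ArithmeticFunction
open scoped ArithmeticFunction.Moebius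
open scoped ArithmeticFunction.zeta

/-- Dirichlet convolution of two functions `ℕ → ℝ`. -/
noncomputable def dconv (f g : ℕ → ℝ) (n : ℕ) : ℝ :=
  ∑ d ∈ n.divisors, f d * g (n / d)

/-- Truncation of `f` to arguments `n ≤ W`. -/
noncomputable def truncLe (f : ℕ → ℝ) (W : ℝ) (n : ℕ) : ℝ :=
  if (n : ℝ) ≤ W then f n else 0

/-- Truncation of `f` to arguments `n > W`. -/
noncomputable def truncGt (f : ℕ → ℝ) (W : ℝ) (n : ℕ) : ℝ :=
  if (n : ℝ) ≤ W then 0 else f n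

/-- Package a plain function as an arithmetic function. -/
noncomputable def toAF (f : ℕ → ℝ) : ArithmeticFunction ℝ :=
  ⟨fun n => if n = 0 then 0 else f n, if_pos rfl⟩

lemma af_sub_apply (f g : ArithmeticFunction ℝ) (n : ℕ) : (f - g) n = f n - g n := by
  have h : f - g + g = f := sub_add_cancel f g
  have h2 : (f - g + g) n = f n := by rw [h]
  rw [ArithmeticFunction.add_apply] at h2
  linarith

lemma toAF_apply (f : ℕ → ℝ) {n : ℕ} (hn : n ≠ 0) : toAF f n = f n := if_neg hn

lemma toAF_mul (f g : ℕ → ℝ) : toAF f * toAF g = toAF (dconv f g) := by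
  ext m
  rcases eq_or_ne m 0 with rfl | hm
  · simp
  · rw [toAF_apply _ hm, mul_apply, dconv,
      Nat.sum_divisorsAntidiagonal (f := fun a b => toAF f a * toAF g b)]
    refine Finset.sum_congr rfl fun d hd => ?_
    obtain ⟨hdvd, hm'⟩ := Nat.mem_divisors.mp hd
    have hd0 : d ≠ 0 := fun h => hm' (by simpa [h] using hdvd)
    have hq0 : m / d ≠ 0 :=
      (Nat.div_pos (Nat.le_of_dvd (Nat.pos_of_ne_zero hm) hdvd) (Nat.pos_of_ne_zero hd0)).ne'
    rw [toAF_apply _ hd0, toAF_apply _ hq0]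

lemma toAF_split (f : ℕ → ℝ) (W : ℝ) :
    toAF (truncLe f W) + toAF (truncGt f W) = toAF f := by
  ext m
  rcases eq_or_ne m 0 with rfl | hm
  · simp
  · rw [ArithmeticFunction.add_apply, toAF_apply _ hm, toAF_apply _ hm, toAF_apply _ hm, truncLe, truncGt]
    split <;> simp

lemma toAF_vonMangoldt : toAF (fun m => Λ m) = Λ := by
  ext m
  rcases eq_or_ne m 0 with rfl | hm
  · simp
  · rw [toAF_apply _ hm]

lemma toAF_moebius : toAF (fun m => (μ m : ℝ)) = (μ : ArithmeticFunction ℝ) := by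
  ext m
  rcases eq_or_ne m 0 with rfl | hm
  · simp
  · rw [toAF_apply _ hm, intCoe_apply]

lemma toAF_one : toAF (fun _ => (1 : ℝ)) = (ζ : ArithmeticFunction ℝ) := by
  ext m
  rcases eq_or_ne m 0 with rfl | hm
  · simp
  · rw [toAF_apply _ hm, natCoe_apply, zeta_apply_ne hm, Nat.cast_one]

lemma toAF_log : toAF (fun m => Real.log m) = ArithmeticFunction.log := by
  ext m
  rcases eq_or_ne m 0 with rfl | hm
  · simp [ArithmeticFunction.log]
  · rw [toAF_apply _ hm, log_apply]

/-- **Vaughan's identity**: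
`Λ = μ_{≤U} ∗ log − Λ_{≤V} ∗ μ_{≤U} ∗ 1 + 1 ∗ μ_{>U} ∗ Λ_{>V} + Λ_{≤V}`. -/
theorem vaughan_identity (U V : ℝ) (hU : 0 ≤ U) (hV : 0 ≤ V)
    (n : ℕ) (hn : 1 ≤ n) :
    Λ n =
      dconv (truncLe (fun m => (μ m : ℝ)) U) (fun m => Real.log m) n
        - dconv (truncLe (fun m => Λ m) V)
            (dconv (truncLe (fun m => (μ m : ℝ)) U) (fun _ => (1 : ℝ))) n
        + dconv (fun _ => (1 : ℝ))
            (dconv (truncGt (fun m => (μ m : ℝ)) U) (truncGt (fun m => Λ m) V)) n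
        + truncLe (fun m => Λ m) V n := by
  have hn0 : n ≠ 0 := by omega
  set ML := toAF (truncLe (fun m => (μ m : ℝ)) U) with hML
  set MG := toAF (truncGt (fun m => (μ m : ℝ)) U) with hMG
  set LL := toAF (truncLe (fun m => Λ m) V) with hLL
  set LG := toAF (truncGt (fun m => Λ m) V) with hLG
  have key : ML * ArithmeticFunction.log - LL * (ML * ζ) + (ζ : ArithmeticFunction ℝ) * (MG * LG)
      + LL = Λ := by
    have h1 : ML + MG = (μ : ArithmeticFunction ℝ) := by
      rw [hML, hMG, toAF_split, toAF_moebius]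
    have h2 : LL + LG = Λ := by
      rw [hLL, hLG, toAF_split, toAF_vonMangoldt]
    have h3 : Λ * (ζ : ArithmeticFunction ℝ) = ArithmeticFunction.log := vonMangoldt_mul_zeta
    have h4 : (μ : ArithmeticFunction ℝ) * ζ = 1 := coe_moebius_mul_coe_zeta
    have hMG' : MG = (μ : ArithmeticFunction ℝ) - ML := by rw [← h1]; ring
    have hLG' : LG = Λ - LL := by rw [← h2]; ring
    rw [hMG', hLG', ← h3]
    linear_combination (Λ - LL) * h4
  calc Λ n = (ML * ArithmeticFunction.log - LL * (ML * ζ)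
        + (ζ : ArithmeticFunction ℝ) * (MG * LG) + LL) n := by rw [key]
    _ = (ML * ArithmeticFunction.log) n - (LL * (ML * ζ)) n
        + ((ζ : ArithmeticFunction ℝ) * (MG * LG)) n + LL n := by
        rw [ArithmeticFunction.add_apply, ArithmeticFunction.add_apply, af_sub_apply]
    _ = _ := by
        rw [hML, hMG, hLL, hLG, ← toAF_log, ← toAF_one, toAF_mul, toAF_mul, toAF_mul, toAF_mul,
          toAF_mul, toAF_apply _ hn0, toAF_apply _ hn0, toAF_apply _ hn0, toAF_apply _ hn0]
end

section
/- Selberg's identity: for every integer n ≥ 1, Λ(n)·log n = (μ ∗ log²)(n) − (Λ ∗ Λ)(n), where log² denotes the arithmetic function n ↦ (log n)² and ∗ denotes Dirichlet convolution. -/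
open ArithmeticFunction
open scoped ArithmeticFunction.Moebius ArithmeticFunction.zeta

lemma pmul_log_mul (f g : ArithmeticFunction ℝ) :
    (ArithmeticFunction.log).pmul (f * g)
      = ((ArithmeticFunction.log).pmul f) * g + f * ((ArithmeticFunction.log).pmul g) := by
  ext n
  simp only [pmul_apply, mul_apply, ArithmeticFunction.add_apply, log_apply, Finset.mul_sum, ← Finset.sum_add_distrib]
  refine Finset.sum_congr rfl fun p hp => ?_
  obtain ⟨hpn, hn0⟩ := Nat.mem_divisorsAntidiagonal.mp hp
  have h1 : p.1 ≠ 0 := by rintro h; simp [← hpn, h] at hn0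
  have h2 : p.2 ≠ 0 := by rintro h; simp [← hpn, h] at hn0
  rw [← hpn, Nat.cast_mul, Real.log_mul (by exact_mod_cast h1) (by exact_mod_cast h2)]
  ring

lemma selberg_arith :
    (↑μ : ArithmeticFunction ℝ) * (ArithmeticFunction.log).pmul ArithmeticFunction.log
      = (ArithmeticFunction.log).pmul Λ + Λ * Λ := by
  have h := pmul_log_mul (ζ : ArithmeticFunction ℝ) Λ
  rw [zeta_mul_vonMangoldt] at h
  have hz : (ArithmeticFunction.log).pmul (ζ : ArithmeticFunction ℝ)
      = ArithmeticFunction.log := pmul_zeta _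
  rw [h, hz, mul_add, ← mul_assoc, ← mul_assoc, moebius_mul_log_eq_vonMangoldt,
    coe_moebius_mul_coe_zeta, one_mul, add_comm]

/-- **Selberg's identity**: `Λ(n)·log n = (μ ∗ log²)(n) − (Λ ∗ Λ)(n)`. -/
theorem selberg_identity (n : ℕ) (hn : 1 ≤ n) :
    Λ n * Real.log n =
      dconv (fun m => (μ m : ℝ)) (fun m => (Real.log m) ^ 2) n
        - dconv (fun m => Λ m) (fun m => Λ m) n := by
  have key := congrFun (congrArg DFunLike.coe selberg_arith) n
  simp only [mul_apply, ArithmeticFunction.add_apply, pmul_apply, log_apply, intCoe_apply] at key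
  have h1 : dconv (fun m => (μ m : ℝ)) (fun m => (Real.log m) ^ 2) n
      = ∑ p ∈ n.divisorsAntidiagonal, (μ p.1 : ℝ) * (Real.log p.2 * Real.log p.2) := by
    rw [Nat.sum_divisorsAntidiagonal (fun a b => (μ a : ℝ) * (Real.log b * Real.log b))]
    simp [dconv, sq]
  have h2 : dconv (fun m => Λ m) (fun m => Λ m) n
      = ∑ p ∈ n.divisorsAntidiagonal, Λ p.1 * Λ p.2 := by
    rw [Nat.sum_divisorsAntidiagonal (fun a b => Λ a * Λ b)]
    simp [dconv]
  rw [h1, h2, key]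
  ring
end

section
/- Let N ≥ 7. Suppose that (i) every even integer m with 4 ≤ m ≤ 4·10^18 + 2 can be written as the sum of two primes, and (ii) there exists a finite strictly increasing sequence of primes p₀ = 3 < p₁ < ⋯ < p_k with p_k ≥ N such that 4 ≤ p_{i+1} − p_i ≤ 4·10^18 for every 0 ≤ i < k. Then every odd integer n with 5 < n ≤ N can be written as the sum of three primes. -/
/-- From a verification of the binary Goldbach conjecture up to `4·10^18 + 2`
and a prime ladder reaching `N`, the ternary Goldbach conjecture follows for
all odd `5 < n ≤ N`. -/
theorem ternary_goldbach_from_ladder (N : ℕ) (hN : 7 ≤ N)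
    (hbinary : ∀ m : ℕ, Even m → 4 ≤ m → m ≤ 4 * 10 ^ 18 + 2 →
      ∃ p q : ℕ, p.Prime ∧ q.Prime ∧ m = p + q)
    (hladder : ∃ (k : ℕ) (p : ℕ → ℕ),
      p 0 = 3 ∧
      (∀ i ≤ k, (p i).Prime) ∧
      N ≤ p k ∧
      ∀ i < k, p i < p (i + 1) ∧ 4 ≤ p (i + 1) - p i ∧
        p (i + 1) - p i ≤ 4 * 10 ^ 18) :
    ∀ n : ℕ, Odd n → 5 < n → n ≤ N →
      ∃ p q r : ℕ, p.Prime ∧ q.Prime ∧ r.Prime ∧ n = p + q + r := by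
  obtain ⟨k, p, hp0, hprime, hNk, hstep⟩ := hladder
  intro n hodd h5 hnN
  have hmono : ∀ i ≤ k, 3 ≤ p i := by
    intro i hi
    induction i with
    | zero => omega
    | succ j ih =>
      have hj : j < k := by omega
      have h1 := (hstep j hj).1
      have h2 := ih (by omega)
      omega
  have h7 : 7 ≤ n := by
    obtain ⟨t, ht⟩ := hodd; omega
  set P : ℕ → Prop := fun i => p i + 4 ≤ n with hP
  have hdec : DecidablePred P := fun i => by unfold P; infer_instance
  have hP0 : P 0 := by simp only [hP, hp0]; omega
  set i := Nat.findGreatest P k with hi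
  have hPi : P i := Nat.findGreatest_spec (Nat.zero_le k) hP0
  have hik : i ≤ k := Nat.findGreatest_le k
  have hlt : i < k := by
    rcases lt_or_eq_of_le hik with h | h
    · exact h
    · exfalso
      have := hPi
      rw [h] at this
      simp only [hP] at this
      omega
  have hnot : ¬ P (i + 1) := Nat.findGreatest_is_greatest (Nat.lt_succ_self i) hlt
  obtain ⟨hlt1, hge4, hle⟩ := hstep i hlt
  have hpi_prime := hprime i hik
  have hpi3 := hmono i hik
  have hpi_odd : Odd (p i) := hpi_prime.odd_of_ne_two (by omega)
  have hm_even : Even (n - p i) := by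
    obtain ⟨a, ha⟩ := hodd
    obtain ⟨b, hb⟩ := hpi_odd
    simp only [hP] at hPi
    exact ⟨a - b, by omega⟩
  have hm4 : 4 ≤ n - p i := by simp only [hP] at hPi; omega
  have hmub : n - p i ≤ 4 * 10 ^ 18 + 2 := by
    simp only [hP, not_le] at hnot
    obtain ⟨c, hc⟩ := hm_even
    simp only [hP] at hPi
    omega
  obtain ⟨q, r, hq, hr, hqr⟩ := hbinary (n - p i) hm_even hm4 hmub
  simp only [hP] at hPi
  exact ⟨p i, q, r, hpi_prime, hq, hr, by omega⟩
end
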